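/- Let e_1,…,e_n be an orthonormal basis of a real inner product space V, and suppose K is the symmetric bilinear map defined by K(e_i,e_i) = μ_1 e_1 + … + μ_{i-1} e_{i-1} + λ_i e_i and K(e_i,e_j) = μ_i e_j for i < j, where the numbers satisfy μ_i = (λ_i − √(λ_i² − 4A_{i−1}))/2 and A_i = A_{i−1} − μ_i² with A_0 = A and λ_i² − 4A_{i−1} ≥ 0. Then the trilinear form g(K(X,Y),Z) is totally symmetric and g(K(X,W),K(Y,Z)) − g(K(Y,W),K(X,Z)) = A(g(X,W)g(Y,Z) − g(Y,W)g(X,Z)) for all X,Y,Z,W, i.e., K has constant sectional K-curvature A. -/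

import Mathlib

open scoped RealInnerProductSpace

/-- if `K` is given on an orthonormal basis by Opozda's normal
form `K(e_i,e_i) = Σ_{j<i} μ_j e_j + λ_i e_i`, `K(e_i,e_j) = μ_i e_j` (`i<j`)
with `μ_i = (λ_i − √(λ_i² − 4A_{i−1}))/2`, `A_i = A_{i−1} − μ_i²`, `A_0 = A`,
`λ_i² − 4A_{i−1} ≥ 0`, then the cubic form `g(K(X,Y),Z)` is totally symmetric
and `K` has constant sectional `K`-curvature `A`. -/
theorem stmt_10 {V : Type*} [NormedAddCommGroup V] [InnerProductSpace ℝ V]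
    [FiniteDimensional ℝ V] {n : ℕ}
    (b : OrthonormalBasis (Fin n) ℝ V)
    (K : V →ₗ[ℝ] V →ₗ[ℝ] V)
    (hKcomm : ∀ X Y : V, K X Y = K Y X)
    (lam mu : Fin n → ℝ) (A : ℝ) (Aseq : ℕ → ℝ)
    (hA0 : Aseq 0 = A)
    (hge : ∀ i : Fin n, lam i ^ 2 - 4 * Aseq i.val ≥ 0)
    (hmu : ∀ i : Fin n, mu i = (lam i - Real.sqrt (lam i ^ 2 - 4 * Aseq i.val)) / 2)
    (hArec : ∀ i : Fin n, Aseq (i.val + 1) = Aseq i.val - mu i ^ 2)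
    (hKdiag : ∀ i : Fin n,
      K (b i) (b i) = (∑ j ∈ Finset.univ.filter (fun j => j < i), mu j • b j)
        + lam i • b i)
    (hKoff : ∀ i j : Fin n, i < j → K (b i) (b j) = mu i • b j) :
    (∀ X Y Z : V, ⟪K X Y, Z⟫ = ⟪K X Z, Y⟫) ∧
    (∀ X Y Z W : V, ⟪K X W, K Y Z⟫ - ⟪K Y W, K X Z⟫
      = A * (⟪X, W⟫ * ⟪Y, Z⟫ - ⟪Y, W⟫ * ⟪X, Z⟫)) := by
  classical
  have einner : ∀ p q : Fin n, ⟪b p, b q⟫ = if p = q then 1 else 0 :=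
    orthonormal_iff_ite.mp b.orthonormal
  have e_eq : ∀ p : Fin n, ⟪b p, b p⟫ = 1 := fun p => by rw [einner, if_pos rfl]
  have e_ne : ∀ p q : Fin n, p ≠ q → ⟪b p, b q⟫ = 0 := fun p q h => by rw [einner, if_neg h]
  have hoff' : ∀ i j : Fin n, j < i → K (b i) (b j) = mu j • b i := by
    intro i j h; rw [hKcomm]; exact hKoff j i h
  -- the fundamental quadratic identity
  have key : ∀ i : Fin n, lam i * mu i = Aseq i.val + mu i ^ 2 := by
    intro i
    have hs : Real.sqrt (lam i ^ 2 - 4 * Aseq i.val) ^ 2 = lam i ^ 2 - 4 * Aseq i.val :=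
      Real.sq_sqrt (hge i)
    rw [hmu i]
    linear_combination (-(1:ℝ)/4) * hs
  -- inner products of diagonal values with basis vectors
  have hD : ∀ a k : Fin n, ⟪K (b a) (b a), b k⟫
      = (if k < a then mu k else 0) + (if k = a then lam a else 0) := by
    intro a k
    rw [hKdiag a, inner_add_left, sum_inner, real_inner_smul_left, einner]
    have : ∀ j ∈ Finset.univ.filter (fun j : Fin n => j < a),
        ⟪mu j • b j, b k⟫ = if j = k then mu j else 0 := by
      intro j _
      rw [real_inner_smul_left, einner]
      split_ifs <;> simp
    rw [Finset.sum_congr rfl this, Finset.sum_ite_eq' _ k mu]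
    simp only [Finset.mem_filter, Finset.mem_univ, true_and, mul_ite, mul_one, mul_zero]
    by_cases h : a = k
    · subst h; simp
    · simp [h, Ne.symm h]
  have hDlt : ∀ a k : Fin n, k < a → ⟪K (b a) (b a), b k⟫ = mu k := by
    intro a k h; rw [hD, if_pos h, if_neg h.ne]; ring
  have hDself : ∀ a : Fin n, ⟪K (b a) (b a), b a⟫ = lam a := by
    intro a; rw [hD, if_neg (lt_irrefl a), if_pos rfl]; ring
  have hDgt : ∀ a k : Fin n, a < k → ⟪K (b a) (b a), b k⟫ = 0 := by
    intro a k h; rw [hD, if_neg (not_lt.mpr h.le), if_neg h.ne']; ring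
  -- sum of squares of mu
  have sumsq : ∀ m : ℕ, m ≤ n →
      ∑ j ∈ Finset.univ.filter (fun j : Fin n => j.val < m), mu j ^ 2 = A - Aseq m := by
    intro m
    induction m with
    | zero => intro _; simp [hA0]
    | succ m ih =>
      intro h
      have hm : m < n := h
      have e : Finset.univ.filter (fun j : Fin n => j.val < m + 1)
          = insert ⟨m, hm⟩ (Finset.univ.filter (fun j : Fin n => j.val < m)) := by
        ext j
        simp only [Finset.mem_filter, Finset.mem_univ, true_and, Finset.mem_insert, Fin.ext_iff]
        omega
      rw [e, Finset.sum_insert (by simp), ih hm.le, hArec ⟨m, hm⟩]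
      ring
  -- inner products between two diagonal values
  have hDD : ∀ a c : Fin n, a < c →
      ⟪K (b a) (b a), K (b c) (b c)⟫ = A + mu a ^ 2 := by
    intro a c h
    conv_lhs => rw [hKdiag a]
    rw [inner_add_left, sum_inner, real_inner_smul_left]
    have h1 : ∀ j ∈ Finset.univ.filter (fun j : Fin n => j < a),
        ⟪mu j • b j, K (b c) (b c)⟫ = mu j ^ 2 := by
      intro j hj
      simp only [Finset.mem_filter, Finset.mem_univ, true_and] at hj
      rw [real_inner_smul_left, real_inner_comm, hDlt c j (hj.trans h)]
      ring
    have h2 : ⟪b a, K (b c) (b c)⟫ = mu a := by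
      rw [real_inner_comm, hDlt c a h]
    rw [Finset.sum_congr rfl h1, h2]
    have e : Finset.univ.filter (fun j : Fin n => j < a)
        = Finset.univ.filter (fun j : Fin n => j.val < a.val) := rfl
    rw [e, sumsq a.val a.isLt.le, key a]
    ring
  -- Part 1 at basis vectors
  have part1b : ∀ i j k : Fin n, ⟪K (b i) (b j), b k⟫ = ⟪K (b i) (b k), b j⟫ := by
    intro i j k
    rcases lt_trichotomy i j with hij | hij | hij <;> rcases lt_trichotomy i k with hik | hik | hik
    · rw [hKoff i j hij, hKoff i k hik, real_inner_smul_left, real_inner_smul_left,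
        einner, einner]
      by_cases h : j = k
      · rw [if_pos h, if_pos h.symm]
      · rw [if_neg h, if_neg (Ne.symm h)]
    · subst hik
      rw [hKoff i j hij, real_inner_smul_left, hDgt i j hij, e_ne j i hij.ne']
      ring
    · rw [hKoff i j hij, hoff' i k hik, real_inner_smul_left, real_inner_smul_left,
        e_ne j k (hik.trans hij).ne', e_ne i j hij.ne]
      ring
    · subst hij
      rw [hKoff i k hik, real_inner_smul_left, hDgt i k hik, e_ne k i hik.ne']
      ring
    · subst hij; subst hik; rfl
    · subst hij
      rw [hoff' i k hik, real_inner_smul_left, hDlt i k hik, e_eq i]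
      ring
    · rw [hoff' i j hij, hKoff i k hik, real_inner_smul_left, real_inner_smul_left,
        e_ne i k hik.ne, e_ne k j (hij.trans hik).ne']
      ring
    · subst hik
      rw [hoff' i j hij, real_inner_smul_left, hDlt i j hij, e_eq i]
      ring
    · rw [hoff' i j hij, hoff' i k hik, real_inner_smul_left, real_inner_smul_left,
        e_ne i k hik.ne', e_ne i j hij.ne']
      ring
  -- Part 2 core at basis vectors, normalized ordering
  have core : ∀ i j k l : Fin n, i < j → k < l → i ≤ k →
      ⟪K (b i) (b l), K (b j) (b k)⟫ - ⟪K (b j) (b l), K (b i) (b k)⟫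
        = A * (⟪b i, b l⟫ * ⟪b j, b k⟫ - ⟪b j, b l⟫ * ⟪b i, b k⟫) := by
    intro i j k l hij hkl hik
    have hil : i < l := lt_of_le_of_lt hik hkl
    rw [hKoff i l hil]
    rcases eq_or_lt_of_le hik with rfl | hik'
    · -- i = k
      rcases lt_trichotomy j l with hjl | rfl | hlj
      · -- i = k < j < l
        rw [hoff' j i hij, hKoff j l hjl]
        simp only [real_inner_smul_left, real_inner_smul_right]
        rw [real_inner_comm ((K (b i)) (b i)) (b l), hDgt i l hil,
          e_ne l j hjl.ne', e_ne i l hil.ne, e_ne j i hij.ne', e_ne j l hjl.ne, e_eq i]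
        ring
      · -- i = k, j = l
        rw [hoff' j i hij, real_inner_comm ((K (b i)) (b i)) ((K (b j)) (b j)), hDD i j hij]
        simp only [real_inner_smul_left, real_inner_smul_right]
        rw [e_eq j, e_eq i, e_ne i j hij.ne, e_ne j i hij.ne']
        ring
      · -- i = k < l < j
        rw [hoff' j i hij, hoff' j l hlj]
        simp only [real_inner_smul_left, real_inner_smul_right]
        rw [real_inner_comm ((K (b i)) (b i)) (b j), hDgt i j hij,
          e_ne l j hlj.ne, e_ne i l hil.ne, e_ne j i hij.ne', e_ne j l hlj.ne', e_eq i]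
        ring
    · -- i < k
      rw [hKoff i k hik']
      rcases lt_trichotomy j k with hjk | rfl | hkj
      · rw [hKoff j k hjk, hKoff j l (hjk.trans hkl)]
        simp only [real_inner_smul_left, real_inner_smul_right]
        rw [e_ne l k hkl.ne', e_ne i l hil.ne, e_ne j k hjk.ne, e_ne j l (hjk.trans hkl).ne,
          e_ne i k hik'.ne]
        ring
      · -- j = k
        rw [hKoff j l hkl]
        simp only [real_inner_smul_left, real_inner_smul_right]
        rw [real_inner_comm ((K (b j)) (b j)) (b l), hDgt j l hkl,
          e_ne l j hkl.ne', e_ne i l hil.ne, e_eq j, e_ne j l hkl.ne, e_ne i j hik'.ne]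
        ring
      · -- k < j
        rw [hoff' j k hkj]
        rcases lt_trichotomy j l with hjl | rfl | hlj
        · rw [hKoff j l hjl]
          simp only [real_inner_smul_left, real_inner_smul_right]
          rw [e_ne l j hjl.ne', e_ne l k hkl.ne', e_ne i l hil.ne, e_ne j k hkj.ne',
            e_ne j l hjl.ne, e_ne i k hik'.ne]
          ring
        · -- j = l
          simp only [real_inner_smul_left, real_inner_smul_right]
          rw [hDlt j k hkj, e_eq j, e_ne i j (hik'.trans hkj).ne, e_ne j k hkj.ne',
            e_ne i k hik'.ne]
          ring
        · -- l < j
          rw [hoff' j l hlj]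
          simp only [real_inner_smul_left, real_inner_smul_right]
          rw [e_ne l j hlj.ne, e_ne j k hkj.ne', e_ne i l hil.ne, e_ne j l hlj.ne',
            e_ne i k hik'.ne]
          ring
  -- Part 2 at basis vectors, general indices
  have part2b : ∀ i j k l : Fin n,
      ⟪K (b i) (b l), K (b j) (b k)⟫ - ⟪K (b j) (b l), K (b i) (b k)⟫
        = A * (⟪b i, b l⟫ * ⟪b j, b k⟫ - ⟪b j, b l⟫ * ⟪b i, b k⟫) := by
    have main : ∀ i j k l : Fin n, i < j → k < l →
        ⟪K (b i) (b l), K (b j) (b k)⟫ - ⟪K (b j) (b l), K (b i) (b k)⟫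
          = A * (⟪b i, b l⟫ * ⟪b j, b k⟫ - ⟪b j, b l⟫ * ⟪b i, b k⟫) := by
      intro i j k l hij hkl
      rcases le_or_gt i k with hik | hki
      · exact core i j k l hij hkl hik
      · have h := core k l i j hkl hij hki.le
        rw [hKcomm (b k) (b j), hKcomm (b l) (b i), hKcomm (b l) (b j), hKcomm (b k) (b i)] at h
        rw [real_inner_comm ((K (b i)) (b l)) ((K (b j)) (b k)),
          real_inner_comm (b j) (b k), real_inner_comm (b i) (b l),
          real_inner_comm (b j) (b l), real_inner_comm (b i) (b k)] at h
        linear_combination h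
    intro i j k l
    by_cases hij : i = j
    · subst hij; ring
    · by_cases hkl : k = l
      · subst hkl
        rw [real_inner_comm ((K (b j)) (b k)) ((K (b i)) (b k))]
        ring
      · rcases lt_or_gt_of_ne hij with h1 | h1 <;> rcases lt_or_gt_of_ne hkl with h2 | h2
        · exact main i j k l h1 h2
        · have h := main i j l k h1 h2
          rw [real_inner_comm ((K (b j)) (b l)) ((K (b i)) (b k)),
            real_inner_comm ((K (b i)) (b l)) ((K (b j)) (b k))] at h
          linear_combination -h
        · have h := main j i k l h1 h2
          linear_combination -h
        · have h := main j i l k h1 h2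
          rw [real_inner_comm ((K (b i)) (b l)) ((K (b j)) (b k)),
            real_inner_comm ((K (b j)) (b l)) ((K (b i)) (b k))] at h
          linear_combination h
  -- a lifting principle: a function linear in a variable vanishing on basis vanishes
  have lift : ∀ (f : V → ℝ), (∀ x y : V, f (x + y) = f x + f y) →
      (∀ (c : ℝ) (x : V), f (c • x) = c * f x) →
      (∀ i : Fin n, f (b i) = 0) → ∀ v : V, f v = 0 := by
    intro f hadd hsmul hb v
    have h0 : f 0 = 0 := by
      have := hsmul 0 0
      simpa using this
    have hsum : ∀ (s : Finset (Fin n)) (g : Fin n → V),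
        f (∑ i ∈ s, g i) = ∑ i ∈ s, f (g i) := by
      intro s g
      induction s using Finset.induction_on with
      | empty => simpa using h0
      | insert a s hmem ih => rw [Finset.sum_insert hmem, Finset.sum_insert hmem, hadd, ih]
    rw [← b.sum_repr v, hsum]
    simp [hsmul, hb]
  constructor
  · -- Part 1
    have s1 : ∀ (i j : Fin n) (Z : V), ⟪K (b i) (b j), Z⟫ - ⟪K (b i) Z, b j⟫ = 0 := by
      intro i j
      apply lift (fun Z => ⟪K (b i) (b j), Z⟫ - ⟪K (b i) Z, b j⟫)
      · intro x y; simp only [map_add, inner_add_right, inner_add_left, LinearMap.add_apply]; ring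
      · intro c x
        simp only [map_smul, real_inner_smul_right, real_inner_smul_left, LinearMap.smul_apply]
        ring
      · intro k; rw [part1b i j k]; ring
    have s2 : ∀ (i : Fin n) (Y Z : V), ⟪K (b i) Y, Z⟫ - ⟪K (b i) Z, Y⟫ = 0 := by
      intro i Y Z
      revert Y
      apply lift (fun Y => ⟪K (b i) Y, Z⟫ - ⟪K (b i) Z, Y⟫)
      · intro x y; simp only [map_add, inner_add_right, inner_add_left, LinearMap.add_apply]; ring
      · intro c x
        simp only [map_smul, real_inner_smul_right, real_inner_smul_left, LinearMap.smul_apply]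
        ring
      · intro j; exact s1 i j Z
    have s3 : ∀ X Y Z : V, ⟪K X Y, Z⟫ - ⟪K X Z, Y⟫ = 0 := by
      intro X Y Z
      revert X
      apply lift (fun X => ⟪K X Y, Z⟫ - ⟪K X Z, Y⟫)
      · intro x y; simp only [map_add, inner_add_right, inner_add_left, LinearMap.add_apply]; ring
      · intro c x
        simp only [map_smul, real_inner_smul_right, real_inner_smul_left, LinearMap.smul_apply]
        ring
      · intro i; exact s2 i Y Z
    intro X Y Z
    have := s3 X Y Z
    linarith
  · -- Part 2
    have t1 : ∀ (i j k : Fin n) (W : V),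
        ⟪K (b i) W, K (b j) (b k)⟫ - ⟪K (b j) W, K (b i) (b k)⟫
          - A * (⟪b i, W⟫ * ⟪b j, b k⟫ - ⟪b j, W⟫ * ⟪b i, b k⟫) = 0 := by
      intro i j k
      apply lift
      · intro x y
        simp only [map_add, LinearMap.add_apply, inner_add_left, inner_add_right]
        ring
      · intro c x
        simp only [map_smul, LinearMap.smul_apply, real_inner_smul_left, real_inner_smul_right]
        ring
      · intro l
        have := part2b i j k l
        linarith
    have t2 : ∀ (i j : Fin n) (Z W : V),
        ⟪K (b i) W, K (b j) Z⟫ - ⟪K (b j) W, K (b i) Z⟫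
          - A * (⟪b i, W⟫ * ⟪b j, Z⟫ - ⟪b j, W⟫ * ⟪b i, Z⟫) = 0 := by
      intro i j Z W
      revert Z
      apply lift
      · intro x y
        simp only [map_add, LinearMap.add_apply, inner_add_left, inner_add_right]
        ring
      · intro c x
        simp only [map_smul, LinearMap.smul_apply, real_inner_smul_left, real_inner_smul_right]
        ring
      · intro k; exact t1 i j k W
    have t3 : ∀ (i : Fin n) (Y Z W : V),
        ⟪K (b i) W, K Y Z⟫ - ⟪K Y W, K (b i) Z⟫
          - A * (⟪b i, W⟫ * ⟪Y, Z⟫ - ⟪Y, W⟫ * ⟪b i, Z⟫) = 0 := by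
      intro i Y Z W
      revert Y
      apply lift
      · intro x y
        simp only [map_add, LinearMap.add_apply, inner_add_left, inner_add_right]
        ring
      · intro c x
        simp only [map_smul, LinearMap.smul_apply, real_inner_smul_left, real_inner_smul_right]
        ring
      · intro j; exact t2 i j Z W
    have t4 : ∀ X Y Z W : V,
        ⟪K X W, K Y Z⟫ - ⟪K Y W, K X Z⟫
          - A * (⟪X, W⟫ * ⟪Y, Z⟫ - ⟪Y, W⟫ * ⟪X, Z⟫) = 0 := by
      intro X Y Z W
      revert X
      apply lift
      · intro x y
        simp only [map_add, LinearMap.add_apply, inner_add_left, inner_add_right]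
        ring
      · intro c x
        simp only [map_smul, LinearMap.smul_apply, real_inner_smul_left, real_inner_smul_right]
        ring
      · intro i; exact t3 i Y Z W
    intro X Y Z W
    have := t4 X Y Z W
    linarith
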